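/- arXiv:1902.08996 — 2 statements merged into one kernel-verified Lean document; each statement's English description precedes it below -/
import Mathlib

section
/- Let n ≥ 1, let V_1,…,V_n be finite-dimensional real vector spaces, and for each ordered pair (a,b) ∈ {1,…,n}² let γ_{a,b} : V_a → V_b be a linear map. Let σ be the shift map on the full shift Σ_n = {1,…,n}^ℕ, σ(x)_k = x_{k+1}, and let μ be a σ-invariant ergodic Borel probability measure on Σ_n. For x ∈ Σ_n let W_x^+ denote the direct limit of the directed system V_{x_0} → V_{x_1} → V_{x_2} → ⋯ whose connecting map from level k to level k+1 is γ_{x_k, x_{k+1}}. Then for μ-almost every x ∈ Σ_n, the canonical linear map V_{x_0} → W_x^+ (sending v to its equivalence class in the direct limit) is surjective; equivalently, there is a subspace ES_x ⊆ V_{x_0} that the canonical map carries onto W_x^+. -/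
open MeasureTheory

/-- The composed connecting maps of an `ℕ`-indexed directed system of real vector spaces whose
one-step connecting maps are `γ k : V k →ₗ[ℝ] V (k+1)`. -/
noncomputable def comps {V : ℕ → Type} [∀ k, AddCommGroup (V k)] [∀ k, Module ℝ (V k)]
    (γ : ∀ k, V k →ₗ[ℝ] V (k + 1)) : ∀ i j : ℕ, i ≤ j → (V i →ₗ[ℝ] V j) :=
  fun i _ h => Nat.leRecOn h (fun {k} (g : V i →ₗ[ℝ] V k) => (γ k).comp g) LinearMap.id



section auxW
variable {W : ℕ → Type} [∀ k, AddCommGroup (W k)] [∀ k, Module ℝ (W k)]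
  (δ : ∀ k, W k →ₗ[ℝ] W (k + 1))

theorem comps_self (i : ℕ) (h : i ≤ i) : comps δ i i h = LinearMap.id :=
  Nat.leRecOn_self _

theorem comps_succ {i j : ℕ} (h : i ≤ j) (h' : i ≤ j + 1) :
    comps δ i (j + 1) h' = (δ j).comp (comps δ i j h) :=
  Nat.leRecOn_succ h _

theorem comps_comp {i j k : ℕ} (h1 : i ≤ j) (h2 : j ≤ k) :
    (comps δ j k h2).comp (comps δ i j h1) = comps δ i k (h1.trans h2) := by
  induction k, h2 using Nat.le_induction with
  | base => rw [comps_self, LinearMap.id_comp]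
  | succ k h2 ih =>
      rw [comps_succ δ h2, comps_succ δ (h1.trans h2), LinearMap.comp_assoc, ih]

theorem comps_heq {i i' j j' : ℕ} (hi : i = i') (hj : j = j') (h : i ≤ j) (h' : i' ≤ j') :
    HEq (comps δ i j h) (comps δ i' j' h') := by
  subst hi; subst hj; rfl

theorem comps_shift (s : ℕ) {i j : ℕ} (h : i ≤ j) :
    comps (V := fun t => W (s + t)) (fun t => δ (s + t)) i j h
      = comps δ (s + i) (s + j) (Nat.add_le_add_left h s) := by
  induction j, h using Nat.le_induction with
  | base => rw [comps_self, comps_self]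
  | succ j h ih =>
      show comps (V := fun t => W (s + t)) (fun t => δ (s + t)) i (j + 1) _
        = comps δ (s + i) ((s + j) + 1) _
      rw [comps_succ _ h, comps_succ δ (Nat.add_le_add_left h s), ih]

end auxW

section auxV
variable {n : ℕ} {V : Fin n → Type} [∀ a, AddCommGroup (V a)] [∀ a, Module ℝ (V a)]
  [∀ a, FiniteDimensional ℝ (V a)] (γ : ∀ a b : Fin n, V a →ₗ[ℝ] V b)

/-- one-step maps along `x` -/
abbrev Gam (x : ℕ → Fin n) : ∀ k, V (x k) →ₗ[ℝ] V (x (k + 1)) :=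
  fun k => γ (x k) (x (k + 1))

noncomputable def rnk (x : ℕ → Fin n) (m : ℕ) : ℕ :=
  Module.finrank ℝ (LinearMap.range (comps (Gam γ x) 0 m (Nat.zero_le m)))

theorem rank_congr {a a' b b' : Fin n} (ha : a = a') (hb : b = b')
    (f : V a →ₗ[ℝ] V b) (g : V a' →ₗ[ℝ] V b') (hfg : HEq f g) :
    Module.finrank ℝ (LinearMap.range f) = Module.finrank ℝ (LinearMap.range g) := by
  subst ha; subst hb; rw [eq_of_heq hfg]

theorem heq_comp {a a' b b' c c' : Fin n} (ha : a = a') (hb : b = b') (hc : c = c')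
    (f : V a →ₗ[ℝ] V b) (g : V a' →ₗ[ℝ] V b') (hfg : HEq f g) :
    HEq ((γ b c).comp f) ((γ b' c').comp g) := by
  subst ha; subst hb; subst hc; rw [eq_of_heq hfg]

theorem comps_congr (m : ℕ) (x y : ℕ → Fin n) (hxy : ∀ k, k ≤ m → x k = y k) :
    HEq (comps (Gam γ x) 0 m (Nat.zero_le m)) (comps (Gam γ y) 0 m (Nat.zero_le m)) := by
  induction m with
  | zero =>
      rw [comps_self, comps_self]
      rw [hxy 0 le_rfl]
  | succ m ih =>
      rw [comps_succ _ (Nat.zero_le m), comps_succ _ (Nat.zero_le m)]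
      exact heq_comp γ (hxy 0 (Nat.zero_le _)) (hxy m (Nat.le_succ m)) (hxy (m+1) le_rfl)
        _ _ (ih (fun k hk => hxy k (hk.trans (Nat.le_succ m))))

theorem rnk_congr (m : ℕ) (x y : ℕ → Fin n) (hxy : ∀ k, k ≤ m → x k = y k) :
    rnk γ x m = rnk γ y m :=
  rank_congr (hxy 0 (Nat.zero_le m)) (hxy m le_rfl) _ _ (comps_congr γ m x y hxy)

theorem measurable_rnk (m : ℕ) : Measurable fun x : ℕ → Fin n => rnk γ x m := by
  set E : (Fin (m + 1) → Fin n) → (ℕ → Fin n) :=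
    fun w k => if h : k < m + 1 then w ⟨k, h⟩ else w ⟨0, Nat.succ_pos m⟩ with hE
  have key : (fun x : ℕ → Fin n => rnk γ x m)
      = (fun w => rnk γ (E w) m) ∘ (fun x (i : Fin (m + 1)) => x i) := by
    funext x
    exact rnk_congr γ m x _ (fun k hk => by
      simp [hE, Nat.lt_succ_of_le hk, Nat.not_lt.mpr hk])
  rw [key]
  exact (measurable_of_countable _).comp
    (measurable_pi_lambda _ fun i => measurable_pi_apply _)

theorem rnk_succ_le (x : ℕ → Fin n) (m : ℕ) : rnk γ x (m + 1) ≤ rnk γ x m := by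
  show Module.finrank ℝ (LinearMap.range (comps (Gam γ x) 0 (m+1) _)) ≤ _
  rw [comps_succ _ (Nat.zero_le m), LinearMap.range_comp]
  exact Submodule.finrank_map_le _ _

theorem rnk_anti (x : ℕ → Fin n) : Antitone (rnk γ x) :=
  antitone_nat_of_succ_le (rnk_succ_le γ x)

noncomputable def fr (x : ℕ → Fin n) : ℕ := sInf (Set.range (rnk γ x))

theorem fr_le_rnk (x : ℕ → Fin n) (m : ℕ) : fr γ x ≤ rnk γ x m :=
  Nat.sInf_le ⟨m, rfl⟩

theorem fr_spec (x : ℕ → Fin n) : ∃ m0, ∀ m, m0 ≤ m → rnk γ x m = fr γ x := by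
  obtain ⟨m0, hm0⟩ := Nat.sInf_mem (⟨rnk γ x 0, 0, rfl⟩ : (Set.range (rnk γ x)).Nonempty)
  exact ⟨m0, fun m hm => le_antisymm ((rnk_anti γ x hm).trans (le_of_eq hm0)) (fr_le_rnk γ x m)⟩

theorem rnk_shift (x : ℕ → Fin n) (k m : ℕ) :
    rnk γ (fun i => x (k + i)) m
      = Module.finrank ℝ (LinearMap.range (comps (Gam γ x) k (k + m) (Nat.le_add_right k m))) := by
  have h := comps_shift (Gam γ x) k (Nat.zero_le m)
  exact congrArg (fun φ => Module.finrank ℝ (LinearMap.range φ)) h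

theorem fr_le_shift (x : ℕ → Fin n) : fr γ x ≤ fr γ (fun i => x (i + 1)) := by
  have heqfun : (fun i => x (i + 1)) = fun i => x (1 + i) := by
    funext i; exact congrArg x (Nat.add_comm i 1)
  rw [heqfun]
  obtain ⟨m0, hm0⟩ := fr_spec γ (fun i => x (1 + i))
  rw [← hm0 m0 le_rfl, rnk_shift]
  calc fr γ x ≤ rnk γ x (m0 + 1) := fr_le_rnk γ x (m0 + 1)
    _ ≤ Module.finrank ℝ (LinearMap.range (comps (Gam γ x) 1 (m0 + 1)
          (Nat.le_add_left 1 m0))) := by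
        show Module.finrank ℝ (LinearMap.range (comps (Gam γ x) 0 (m0+1) _)) ≤ _
        rw [← comps_comp (Gam γ x) (Nat.zero_le 1) (Nat.le_add_left 1 m0)]
        exact Submodule.finrank_mono (LinearMap.range_comp_le_range _ _)
    _ = Module.finrank ℝ (LinearMap.range (comps (Gam γ x) 1 (1 + m0)
          (Nat.le_add_right 1 m0))) :=
        rank_congr rfl (congrArg x (Nat.add_comm m0 1)) _ _
          (comps_heq _ rfl (Nat.add_comm m0 1) _ _)

end auxV

/-- For finite-dimensional real vector spaces `V 1, …, V n` with linear maps
`γ a b : V a →ₗ[ℝ] V b`, and a shift-invariant ergodic measure `μ` on the full shift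
`Σ_n = (ℕ → Fin n)`, for `μ`-a.e. `x` the canonical map from `V (x 0)` to the direct limit
`W_x^+` of the system `V (x 0) → V (x 1) → ⋯` (with connecting maps `γ (x k) (x (k+1))`)
is surjective. -/
theorem stmt4 (n : ℕ) (hn : 1 ≤ n) (V : Fin n → Type)
    [∀ a, AddCommGroup (V a)] [∀ a, Module ℝ (V a)] [∀ a, FiniteDimensional ℝ (V a)]
    (γ : ∀ a b : Fin n, V a →ₗ[ℝ] V b)
    (μ : Measure (ℕ → Fin n)) [IsProbabilityMeasure μ]
    (herg : Ergodic (fun x (k : ℕ) => x (k + 1)) μ) :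
    ∀ᵐ x ∂μ, Function.Surjective
      (Module.DirectLimit.of ℝ ℕ (fun k => V (x k))
        (comps (fun k => γ (x k) (x (k + 1)))) 0) := by
  classical
  set T : (ℕ → Fin n) → (ℕ → Fin n) := fun x k => x (k + 1) with hT
  -- measurability of level sets of fr
  have hmeasle : ∀ c : ℕ, MeasurableSet {x : ℕ → Fin n | fr γ x ≤ c} := by
    intro c
    have hset : {x : ℕ → Fin n | fr γ x ≤ c} = ⋃ m, {x | rnk γ x m ≤ c} := by
      ext x
      simp only [Set.mem_setOf_eq, Set.mem_iUnion]
      constructor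
      · intro h
        obtain ⟨m0, hm0⟩ := fr_spec γ x
        exact ⟨m0, (hm0 m0 le_rfl).le.trans h⟩
      · rintro ⟨m, hm⟩
        exact (fr_le_rnk γ x m).trans hm
    rw [hset]
    exact MeasurableSet.iUnion fun m => (measurable_rnk γ m) measurableSet_Iic
  have hmeaseq : ∀ c : ℕ, MeasurableSet {x : ℕ → Fin n | fr γ x = c} := by
    intro c
    match c with
    | 0 =>
        have : {x : ℕ → Fin n | fr γ x = 0} = {x | fr γ x ≤ 0} := by
          ext x; simp [Nat.le_zero]
        rw [this]; exact hmeasle 0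
    | c + 1 =>
        have : {x : ℕ → Fin n | fr γ x = c + 1}
            = {x | fr γ x ≤ c + 1} \ {x | fr γ x ≤ c} := by
          ext x; simp only [Set.mem_setOf_eq, Set.mem_diff]; omega
        rw [this]; exact (hmeasle _).diff (hmeasle _)
  -- dichotomy for the sublevel sets
  have hdich : ∀ c, μ {x : ℕ → Fin n | fr γ x ≤ c} = 0 ∨ μ {x | fr γ x ≤ c} = 1 := by
    intro c
    have hsub : T ⁻¹' {x : ℕ → Fin n | fr γ x ≤ c} ⊆ {x | fr γ x ≤ c} := by
      intro x hx
      exact le_trans (fr_le_shift γ x) hx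
    rcases herg.ae_empty_or_univ_of_preimage_ae_le (hmeasle c).nullMeasurableSet
        hsub.eventuallyLE with h | h
    · left; rw [measure_congr h, measure_empty]
    · right; rw [measure_congr h, measure_univ]
  -- the essential eventual rank r
  set D := Finset.univ.sup (fun a : Fin n => Module.finrank ℝ (V a)) with hD
  have hfrD : ∀ x : ℕ → Fin n, fr γ x ≤ D := by
    intro x
    refine (fr_le_rnk γ x 0).trans ?_
    show Module.finrank ℝ (LinearMap.range (comps (Gam γ x) 0 0 (Nat.zero_le 0))) ≤ D
    rw [comps_self, LinearMap.range_id, finrank_top]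
    exact Finset.le_sup (f := fun a : Fin n => Module.finrank ℝ (V a)) (Finset.mem_univ (x 0))
  have hex : ∃ c, μ {x : ℕ → Fin n | fr γ x ≤ c} = 1 := by
    refine ⟨D, ?_⟩
    have : {x : ℕ → Fin n | fr γ x ≤ D} = Set.univ := Set.eq_univ_of_forall hfrD
    rw [this, measure_univ]
  set r := Nat.find hex with hrdef
  have hr1 : μ {x : ℕ → Fin n | fr γ x ≤ r} = 1 := Nat.find_spec hex
  have haefr : ∀ᵐ x ∂μ, fr γ x = r := by
    have h1 : ∀ᵐ x ∂μ, fr γ x ≤ r :=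
      (mem_ae_iff_prob_eq_one (hmeasle r)).2 hr1
    rcases Nat.eq_zero_or_pos r with h0 | hpos
    · filter_upwards [h1] with x hx
      omega
    · have hne : ¬ μ {x : ℕ → Fin n | fr γ x ≤ r - 1} = 1 :=
        Nat.find_min hex (by omega)
      have h0' : μ {x : ℕ → Fin n | fr γ x ≤ r - 1} = 0 := (hdich (r - 1)).resolve_right hne
      have h2 : ∀ᵐ x ∂μ, ¬ (fr γ x ≤ r - 1) := by
        rw [ae_iff]
        simpa using h0'
      filter_upwards [h1, h2] with x hx1 hx2
      omega
  have h1r : μ {x : ℕ → Fin n | fr γ x = r} = 1 :=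
    (mem_ae_iff_prob_eq_one (hmeaseq r)).1 haefr
  -- a.e. all iterates have eventual rank r
  have haeiter : ∀ᵐ x ∂μ, ∀ k : ℕ, fr γ (T^[k] x) = r := by
    rw [ae_all_iff]
    intro k
    have hmp : MeasurePreserving T^[k] μ μ := herg.toMeasurePreserving.iterate k
    have hμ : μ (T^[k] ⁻¹' {x : ℕ → Fin n | fr γ x = r}) = 1 := by
      rw [hmp.measure_preimage (hmeaseq r).nullMeasurableSet]; exact h1r
    exact (mem_ae_iff_prob_eq_one ((hmeaseq r).preimage hmp.measurable)).2 hμ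
  -- conclusion
  have hiter : ∀ (k : ℕ) (y : ℕ → Fin n) (i : ℕ), T^[k] y i = y (k + i) := by
    intro k
    induction k with
    | zero => intro y i; simp
    | succ k ih =>
        intro y i
        rw [Function.iterate_succ_apply, ih (T y) i]
        exact congrArg y (by omega)
  filter_upwards [haeiter] with x hx
  have hx' : ∀ k : ℕ, fr γ (fun i => x (k + i)) = r := by
    intro k
    exact ((congrArg (fr γ) (funext fun i => hiter k x i)).symm).trans (hx k)
  have hfrx : fr γ x = r := by
    have := hx 0
    rwa [Function.iterate_zero_apply] at this
  intro z
  obtain ⟨k, v, rfl⟩ := Module.DirectLimit.exists_of z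
  obtain ⟨m0, hm0⟩ := fr_spec γ x
  obtain ⟨m1, hm1⟩ := fr_spec γ (fun i => x (k + i))
  set m := max m0 m1 with hm
  set j := k + m with hj
  have h0j : (0 : ℕ) ≤ j := Nat.zero_le j
  have hkj : k ≤ j := Nat.le_add_right k m
  have hA : rnk γ x j = r :=
    (hm0 j (le_trans (le_max_left m0 m1) (Nat.le_add_left m k))).trans hfrx
  have hB : Module.finrank ℝ (LinearMap.range (comps (Gam γ x) k j hkj)) = r := by
    rw [← rnk_shift γ x k m]
    exact (hm1 m (le_max_right m0 m1)).trans (hx' k)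
  have hle : LinearMap.range (comps (Gam γ x) 0 j h0j)
      ≤ LinearMap.range (comps (Gam γ x) k j hkj) := by
    rw [← comps_comp (Gam γ x) (Nat.zero_le k) hkj]
    exact LinearMap.range_comp_le_range _ _
  have heqr : LinearMap.range (comps (Gam γ x) 0 j h0j)
      = LinearMap.range (comps (Gam γ x) k j hkj) :=
    Submodule.eq_of_le_of_finrank_le hle (le_of_eq (hB.trans hA.symm))
  have hmem : comps (Gam γ x) k j hkj v ∈ LinearMap.range (comps (Gam γ x) 0 j h0j) := by
    rw [heqr]
    exact LinearMap.mem_range_self _ v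
  obtain ⟨w, hw⟩ := hmem
  refine ⟨w, ?_⟩
  calc Module.DirectLimit.of ℝ ℕ (fun t => V (x t)) (comps (Gam γ x)) 0 w
      = Module.DirectLimit.of ℝ ℕ (fun t => V (x t)) (comps (Gam γ x)) j
          (comps (Gam γ x) 0 j h0j w) := (Module.DirectLimit.of_f).symm
    _ = Module.DirectLimit.of ℝ ℕ (fun t => V (x t)) (comps (Gam γ x)) j
          (comps (Gam γ x) k j hkj v) := by rw [hw]
    _ = Module.DirectLimit.of ℝ ℕ (fun t => V (x t)) (comps (Gam γ x)) k v :=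
        Module.DirectLimit.of_f
end

section
/- Let B = (V, E) be a Bratteli diagram with path space X_B, and let μ be a Borel probability measure on X_B invariant under the tail equivalence relation. For each k ≥ 1 let D_k ⊆ E_{0,k} be a set of finite paths from level 0 to level k, and let Y_k = ⋃_{ē ∈ D_k} C_ē ⊆ X_B. Suppose there exist constants c, C > 0 and real numbers α > β ≥ 0 such that for every k ≥ 1: |E_v| ≥ c·e^{αk} for every vertex v ∈ V_k, and |D_k| ≤ C·e^{βk}. Then μ(limsup_{k→∞} Y_k) = 0, where limsup_{k→∞} Y_k = ⋂_{n≥1} ⋃_{k≥n} Y_k. -/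
open MeasureTheory
open scoped ENNReal

/-- A Bratteli diagram: finite nonempty vertex sets at each level, finite edge sets between
consecutive levels (here `E k` is the set of edges between level `k` and level `k+1`), with
surjective source and range maps. -/
structure BratteliDiagram where
  V : ℕ → Type
  E : ℕ → Type
  fintV : ∀ k, Fintype (V k)
  fintE : ∀ k, Fintype (E k)
  neV : ∀ k, Nonempty (V k)
  src : ∀ k, E k → V k
  rng : ∀ k, E k → V (k + 1)
  src_surj : ∀ k, Function.Surjective (src k)
  rng_surj : ∀ k, Function.Surjective (rng k)

attribute [instance] BratteliDiagram.fintV BratteliDiagram.fintE BratteliDiagram.neV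

namespace BratteliDiagram

variable (B : BratteliDiagram)

/-- The space of infinite paths of a Bratteli diagram. -/
def PathSpace : Type :=
  {e : ∀ k, B.E k // ∀ k, B.rng k (e k) = B.src (k + 1) (e (k + 1))}

/-- The Borel σ-algebra of the path space: each (finite) edge set carries the discrete
topology, whose Borel σ-algebra is `⊤`; the path space gets the (subspace of the) product
σ-algebra. -/
instance : MeasurableSpace B.PathSpace :=
  MeasurableSpace.comap (fun p => p.1) (MeasurableSpace.pi (m := fun _ => (⊤ : MeasurableSpace _)))

/-- Finite paths with `k` edges, from level `0` to level `k`. -/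
def FinPath (k : ℕ) : Type :=
  {e : ∀ i : Fin k, B.E i // ∀ (i : ℕ) (h : i + 1 < k),
    B.rng i (e ⟨i, Nat.lt_of_succ_lt h⟩) = B.src (i + 1) (e ⟨i + 1, h⟩)}

/-- The range (end vertex) of a finite path with `k+1` edges: a vertex at level `k+1`. -/
def endVertex (k : ℕ) (p : B.FinPath (k + 1)) : B.V (k + 1) :=
  B.rng k (p.1 ⟨k, Nat.lt_succ_self k⟩)

/-- The restriction of an infinite path to its first `k` edges. -/
def restr (k : ℕ) (q : B.PathSpace) : B.FinPath k :=
  ⟨fun i => q.1 i, fun i _ => q.2 i⟩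

/-- The cylinder set of all infinite paths agreeing with `p` on the first `k` edges. -/
def cyl (k : ℕ) (p : B.PathSpace) : Set B.PathSpace :=
  {q | ∀ i, i < k → q.1 i = p.1 i}

/-- Invariance of a measure under the tail equivalence relation: two cylinder sets given by
finite paths with the same range have the same measure.  (Since the source maps are
surjective, every finite path is the restriction of an infinite path.) -/
def TailInvariant (μ : Measure B.PathSpace) : Prop :=
  ∀ (k : ℕ) (p q : B.PathSpace), B.rng k (p.1 k) = B.rng k (q.1 k) →
    μ (B.cyl (k + 1) p) = μ (B.cyl (k + 1) q)

end BratteliDiagram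

namespace BratteliDiagram

variable (B : BratteliDiagram)

instance (k : ℕ) : Nonempty (B.E k) :=
  ⟨(B.src_surj k (Classical.arbitrary _)).choose⟩

noncomputable def nextEdge (n : ℕ) (e : B.E n) : B.E (n + 1) :=
  (B.src_surj (n + 1) (B.rng n e)).choose

lemma src_nextEdge (n : ℕ) (e : B.E n) :
    B.src (n + 1) (B.nextEdge n e) = B.rng n e :=
  (B.src_surj (n + 1) (B.rng n e)).choose_spec

noncomputable def extFun (k : ℕ) (p : B.FinPath k) : ∀ n, B.E n
  | 0 => if h : 0 < k then p.1 ⟨0, h⟩ else Classical.arbitrary _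
  | n + 1 => if h : n + 1 < k then p.1 ⟨n + 1, h⟩ else B.nextEdge n (extFun k p n)

lemma extFun_lt (k : ℕ) (p : B.FinPath k) (n : ℕ) (h : n < k) :
    B.extFun k p n = p.1 ⟨n, h⟩ := by
  cases n <;> simp [extFun, h]

lemma extFun_compat (k : ℕ) (p : B.FinPath k) (n : ℕ) :
    B.rng n (B.extFun k p n) = B.src (n + 1) (B.extFun k p (n + 1)) := by
  by_cases h : n + 1 < k
  · rw [B.extFun_lt k p n (Nat.lt_of_succ_lt h), B.extFun_lt k p (n + 1) h]
    exact p.2 n h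
  · show _ = B.src (n + 1) (B.extFun k p (n + 1))
    rw [show B.extFun k p (n + 1) = B.nextEdge n (B.extFun k p n) by simp [extFun, h],
      B.src_nextEdge]

noncomputable def ext (k : ℕ) (p : B.FinPath k) : B.PathSpace :=
  ⟨B.extFun k p, B.extFun_compat k p⟩

def cylOf (k : ℕ) (p : B.FinPath k) : Set B.PathSpace :=
  {q | B.restr k q = p}

lemma cylOf_eq (k : ℕ) (p : B.FinPath k) : B.cylOf k p = B.cyl k (B.ext k p) := by
  ext q
  constructor
  · intro (hq : B.restr k q = p) i hi
    rw [show (B.ext k p).1 i = p.1 ⟨i, hi⟩ from B.extFun_lt k p i hi, ← hq]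
    rfl
  · intro hq
    apply Subtype.ext
    funext i
    rw [show (B.restr k q).1 i = q.1 i from rfl, hq i i.2,
      show (B.ext k p).1 i = p.1 ⟨i, i.2⟩ from B.extFun_lt k p i i.2]

lemma measurableSet_coord (n : ℕ) (e : B.E n) :
    MeasurableSet {q : B.PathSpace | q.1 n = e} := by
  refine ⟨{f | f n = e}, ?_, rfl⟩
  letI : ∀ k, MeasurableSpace (B.E k) := fun _ => ⊤
  exact measurable_pi_apply (X := B.E) n (MeasurableSpace.measurableSet_top (s := {x | x = e}))

lemma measurableSet_cylOf (k : ℕ) (p : B.FinPath k) : MeasurableSet (B.cylOf k p) := by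
  have : B.cylOf k p = ⋂ i : Fin k, {q : B.PathSpace | q.1 i = p.1 i} := by
    ext q
    simp only [cylOf, Set.mem_setOf_eq, Set.mem_iInter]
    constructor
    · intro h i; rw [← h]; rfl
    · intro h; exact Subtype.ext (funext fun i => h i)
  rw [this]
  exact MeasurableSet.iInter fun i => B.measurableSet_coord i (p.1 i)

instance (k : ℕ) : Finite (B.FinPath k) := by
  unfold FinPath; infer_instance

end BratteliDiagram

/-- **Borel–Cantelli estimate for Bratteli diagrams.** If `μ` is a tail-invariant Borel
probability measure on the path space, `D k` is a set of finite paths from level `0` to level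
`k+1` with `Y k` the union of the corresponding cylinder sets, and there are constants
`c, C > 0` and `α > β ≥ 0` such that every vertex `v` at level `k+1` has at least
`c·e^{α(k+1)}` incoming finite paths from level `0`, while `|D k| ≤ C·e^{β(k+1)}`, then
`μ(limsup Y k) = 0`. -/
theorem stmt8 (B : BratteliDiagram) (μ : Measure B.PathSpace) [IsProbabilityMeasure μ]
    (hμ : B.TailInvariant μ)
    (D : ∀ k : ℕ, Set (B.FinPath (k + 1)))
    (c C α β : ℝ) (hc : 0 < c) (hC : 0 < C) (hβ : 0 ≤ β) (hαβ : β < α)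
    (hE : ∀ (k : ℕ) (v : B.V (k + 1)),
      c * Real.exp (α * (k + 1)) ≤
        (Nat.card {p : B.FinPath (k + 1) // B.endVertex k p = v} : ℝ))
    (hD : ∀ k : ℕ, (Nat.card (D k) : ℝ) ≤ C * Real.exp (β * (k + 1))) :
    μ (⋂ n, ⋃ k, ⋃ (_ : n ≤ k), {q : B.PathSpace | B.restr (k + 1) q ∈ D k}) = 0 := by
  classical
  set Y : ℕ → Set B.PathSpace := fun k => {q | B.restr (k + 1) q ∈ D k} with hYdef
  -- exponential positivity
  have hcexp : ∀ k : ℕ, (0 : ℝ) < c * Real.exp (α * (k + 1)) := fun k => by positivity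
  -- main cylinder estimate
  have key : ∀ (k : ℕ) (p : B.FinPath (k + 1)),
      μ (B.cylOf (k + 1) p) ≤ (ENNReal.ofReal (c * Real.exp (α * (k + 1))))⁻¹ := by
    intro k p
    set v := B.endVertex k p with hv
    set T := {p' : B.FinPath (k + 1) // B.endVertex k p' = v} with hT
    letI : Fintype T := Fintype.ofFinite T
    have hmeq : ∀ p' : T, μ (B.cylOf (k + 1) p'.1) = μ (B.cylOf (k + 1) p) := by
      intro p'
      rw [B.cylOf_eq, B.cylOf_eq]
      apply hμ
      rw [show ((B.ext (k + 1) p'.1).1 k) = p'.1.1 ⟨k, Nat.lt_succ_self k⟩ from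
          B.extFun_lt _ _ k (Nat.lt_succ_self k),
        show ((B.ext (k + 1) p).1 k) = p.1 ⟨k, Nat.lt_succ_self k⟩ from
          B.extFun_lt _ _ k (Nat.lt_succ_self k)]
      exact p'.2
    have hdisj : Pairwise (Function.onFun Disjoint fun p' : T => B.cylOf (k + 1) p'.1) := by
      intro a b hab
      rw [Function.onFun, Set.disjoint_left]
      intro q ha hb
      exact hab (Subtype.ext ((show B.restr (k + 1) q = a.1 from ha).symm.trans
        (show B.restr (k + 1) q = b.1 from hb)))
    have hsum : μ (⋃ p' : T, B.cylOf (k + 1) p'.1) = ∑' p' : T, μ (B.cylOf (k + 1) p'.1) :=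
      measure_iUnion hdisj fun p' => B.measurableSet_cylOf _ _
    have h1 : (Nat.card T : ℝ≥0∞) * μ (B.cylOf (k + 1) p) ≤ 1 := by
      calc (Nat.card T : ℝ≥0∞) * μ (B.cylOf (k + 1) p)
          = ∑' p' : T, μ (B.cylOf (k + 1) p'.1) := by
            rw [tsum_congr hmeq, tsum_fintype, Finset.sum_const, Nat.card_eq_fintype_card,
              Finset.card_univ, nsmul_eq_mul]
        _ = μ (⋃ p' : T, B.cylOf (k + 1) p'.1) := hsum.symm
        _ ≤ μ Set.univ := measure_mono (Set.subset_univ _)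
        _ = 1 := measure_univ
    have h2 : ENNReal.ofReal (c * Real.exp (α * (k + 1))) ≤ (Nat.card T : ℝ≥0∞) := by
      rw [← ENNReal.ofReal_natCast]
      exact ENNReal.ofReal_le_ofReal (hE k v)
    calc μ (B.cylOf (k + 1) p) ≤ ((Nat.card T : ℝ≥0∞))⁻¹ := by
          rw [ENNReal.le_inv_iff_mul_le, mul_comm]
          exact h1
      _ ≤ (ENNReal.ofReal (c * Real.exp (α * (k + 1))))⁻¹ := ENNReal.inv_le_inv' h2
  -- per-level bound
  have hYk : ∀ k : ℕ, μ (Y k) ≤ ENNReal.ofReal (C / c * Real.exp ((β - α) * (k + 1))) := by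
    intro k
    letI : Fintype (D k) := Fintype.ofFinite (D k)
    have hYeq : Y k = ⋃ p : D k, B.cylOf (k + 1) p.1 := by
      ext q
      simp only [hYdef, Set.mem_setOf_eq, Set.mem_iUnion, BratteliDiagram.cylOf]
      exact ⟨fun h => ⟨⟨_, h⟩, rfl⟩, fun ⟨p, hp⟩ => hp ▸ p.2⟩
    have hreal : (C * Real.exp (β * (k + 1))) * (c * Real.exp (α * (k + 1)))⁻¹
        = C / c * Real.exp ((β - α) * (k + 1)) := by
      rw [show (β - α) * ((k : ℝ) + 1) = β * (k + 1) - α * (k + 1) by ring, Real.exp_sub]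
      field_simp
    calc μ (Y k) ≤ ∑' p : D k, μ (B.cylOf (k + 1) p.1) := by
          rw [hYeq]; exact measure_iUnion_le _
      _ ≤ ∑' _ : D k, (ENNReal.ofReal (c * Real.exp (α * (k + 1))))⁻¹ :=
          ENNReal.tsum_le_tsum fun p => key k p.1
      _ = (Nat.card (D k) : ℝ≥0∞) * (ENNReal.ofReal (c * Real.exp (α * (k + 1))))⁻¹ := by
          rw [tsum_fintype, Finset.sum_const, Nat.card_eq_fintype_card,
            Finset.card_univ, nsmul_eq_mul]
      _ ≤ ENNReal.ofReal (C * Real.exp (β * (k + 1))) *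
            (ENNReal.ofReal (c * Real.exp (α * (k + 1))))⁻¹ := by
          gcongr
          rw [← ENNReal.ofReal_natCast]
          exact ENNReal.ofReal_le_ofReal (hD k)
      _ = ENNReal.ofReal (C / c * Real.exp ((β - α) * (k + 1))) := by
          rw [← ENNReal.ofReal_inv_of_pos (hcexp k), ← ENNReal.ofReal_mul (by positivity), hreal]
  -- summability
  have hsummable : Summable (fun k : ℕ => C / c * Real.exp ((β - α) * (k + 1))) := by
    have h1 : ∀ k : ℕ, C / c * Real.exp ((β - α) * (k + 1))
        = (C / c * Real.exp (β - α)) * Real.exp (β - α) ^ k := by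
      intro k
      rw [show (β - α) * ((k : ℝ) + 1) = (β - α) + (k : ℝ) * (β - α) by ring, Real.exp_add,
        Real.exp_nat_mul]
      ring
    simp_rw [h1]
    exact (summable_geometric_of_lt_one (Real.exp_nonneg _)
      (Real.exp_lt_one_iff.mpr (by linarith))).mul_left _
  have htsum : (∑' k, μ (Y k)) ≠ ∞ := by
    refine ne_top_of_le_ne_top ?_ (ENNReal.tsum_le_tsum hYk)
    rw [← ENNReal.ofReal_tsum_of_nonneg (fun k => by positivity) hsummable]
    exact ENNReal.ofReal_ne_top
  have hlim := MeasureTheory.measure_limsup_atTop_eq_zero (μ := μ) (s := Y) htsum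
  rw [Filter.limsup_eq_iInf_iSup_of_nat] at hlim
  simpa using hlim
end
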